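/- arXiv:2308.11090 — 2 statements merged into one kernel-verified Lean document; each statement's English description precedes it below -/
import Mathlib

section
/- Let K ≥ 1 and let ν₁, …, ν_K be atomless probability measures on ℝ with cumulative distribution functions F₁, …, F_K, and let G : [0,1] → ℝ be a Borel-measurable map. Then for all s, s' ∈ {1, …, K}, the pushforward of ν_s under G ∘ F_s equals the pushforward of ν_{s'} under G ∘ F_{s'}; indeed both equal the pushforward of the uniform (Lebesgue) probability measure on [0,1] under G. In particular, taking G = Σ_{s'} p_{s'} Q_{s'} with weights p_{s'} ≥ 0 summing to 1 and Q_{s'} the quantile function of ν_{s'}, the barycentric fair predictor f_B(x,s) := G(F_s(f*(x,s))) has conditional score distributions that coincide across all groups, i.e., f_B is Demographic-Parity fair: U(f_B) = 0. -/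
open MeasureTheory

/-- The cumulative distribution function of a measure `ν` on `ℝ`:
`F_ν(u) = ν((-∞, u])`. -/
noncomputable def cdfF (ν : Measure ℝ) (u : ℝ) : ℝ :=
  (ν (Set.Iic u)).toReal

section aux
set_option linter.unusedSectionVars false


variable (ν : Measure ℝ) [IsProbabilityMeasure ν]

lemma cdfF_eq_cdf : cdfF ν = ProbabilityTheory.cdf ν := by
  ext u; rw [cdfF, ProbabilityTheory.cdf_eq_real, Measure.real]

lemma ofReal_cdfF (u : ℝ) : ENNReal.ofReal (cdfF ν u) = ν (Set.Iic u) := by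
  rw [cdfF_eq_cdf, ProbabilityTheory.ofReal_cdf]

lemma cdfF_mono : Monotone (cdfF ν) := by
  rw [cdfF_eq_cdf]; exact ProbabilityTheory.monotone_cdf ν

lemma cdfF_meas : Measurable (cdfF ν) := (cdfF_mono ν).measurable

lemma cdfF_nonneg (u : ℝ) : 0 ≤ cdfF ν u := ENNReal.toReal_nonneg

lemma cdfF_le_one (u : ℝ) : cdfF ν u ≤ 1 := by
  rw [cdfF_eq_cdf]; exact ProbabilityTheory.cdf_le_one ν u

/-- Probability integral transform. -/
lemma map_cdfF [NullSingletonClass ν] :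
    Measure.map (cdfF ν) ν = volume.restrict (Set.Icc (0 : ℝ) 1) := by
  have hF := cdfF_meas ν
  refine Measure.ext_of_Iic _ _ (fun v => ?_)
  rw [Measure.map_apply hF measurableSet_Iic, Measure.restrict_apply measurableSet_Iic]
  rcases lt_or_ge v 0 with hv | hv
  · have h1 : cdfF ν ⁻¹' Set.Iic v = ∅ := by
      ext z; simp only [Set.mem_preimage, Set.mem_Iic, Set.mem_empty_iff_false, iff_false, not_le]
      exact hv.trans_le (cdfF_nonneg ν z)
    have h2 : Set.Iic v ∩ Set.Icc (0:ℝ) 1 = ∅ := by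
      ext z; simp only [Set.mem_inter_iff, Set.mem_Iic, Set.mem_Icc, Set.mem_empty_iff_false,
        iff_false, not_and, and_imp]
      intro h h0 _; linarith
    rw [h1, h2]; simp
  rcases le_or_gt 1 v with hv1 | hv1
  · have h1 : cdfF ν ⁻¹' Set.Iic v = Set.univ := by
      ext z; simp only [Set.mem_preimage, Set.mem_Iic, Set.mem_univ, iff_true]
      exact (cdfF_le_one ν z).trans hv1
    have h2 : Set.Iic v ∩ Set.Icc (0:ℝ) 1 = Set.Icc 0 1 := by
      refine Set.inter_eq_self_of_subset_right (fun z hz => hz.2.trans hv1)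
    rw [h1, h2, measure_univ, Real.volume_Icc]
    norm_num
  -- main case 0 ≤ v < 1
  have h2 : Set.Iic v ∩ Set.Icc (0:ℝ) 1 = Set.Icc 0 v := by
    ext z; simp only [Set.mem_inter_iff, Set.mem_Iic, Set.mem_Icc]
    constructor
    · rintro ⟨h, h0, _⟩; exact ⟨h0, h⟩
    · rintro ⟨h0, h⟩; exact ⟨h, h0, h.trans hv1.le⟩
  rw [h2, Real.volume_Icc]
  set F := cdfF ν with hFdef
  set A := F ⁻¹' Set.Iic v with hA
  rcases A.eq_empty_or_nonempty with hAe | hAne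
  · -- then v = 0
    have hv0 : v = 0 := by
      by_contra h
      have hvpos : 0 < v := lt_of_le_of_ne hv (Ne.symm h)
      have : Filter.Tendsto F Filter.atBot (nhds 0) := by
        rw [hFdef, cdfF_eq_cdf]; exact ProbabilityTheory.tendsto_cdf_atBot ν
      obtain ⟨z, hz⟩ := (this.eventually_lt_const hvpos).exists
      exact absurd (Set.eq_empty_iff_forall_notMem.1 hAe z) (by simp [hA, Set.mem_preimage, hz.le])
    rw [hAe, hv0]; simp
  · -- A nonempty, bounded above
    have hbdd : BddAbove A := by
      have : Filter.Tendsto F Filter.atTop (nhds 1) := by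
        rw [hFdef, cdfF_eq_cdf]; exact ProbabilityTheory.tendsto_cdf_atTop ν
      obtain ⟨b, hb⟩ := (this.eventually_const_lt hv1).exists
      refine ⟨b, fun z hz => ?_⟩
      by_contra h
      exact absurd ((cdfF_mono ν (le_of_not_ge h)).trans hz) (not_le.2 hb)
    set a := sSup A with ha
    have hsub1 : Set.Iio a ⊆ A := fun z hz => by
      obtain ⟨w, hw, hlt⟩ := exists_lt_of_lt_csSup hAne hz
      exact Set.mem_preimage.2 (le_trans (cdfF_mono ν hlt.le) hw)
    have hsub2 : A ⊆ Set.Iic a := fun z hz => le_csSup hbdd hz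
    -- ν (Iio a) ≤ ofReal v
    have hIio : ν (Set.Iio a) ≤ ENNReal.ofReal v := by
      have hun : Set.Iio a = ⋃ n : ℕ, Set.Iic (a - 1/(n+1)) := by
        ext z
        simp only [Set.mem_Iio, Set.mem_iUnion, Set.mem_Iic]
        constructor
        · intro h
          obtain ⟨n, hn⟩ := exists_nat_one_div_lt (sub_pos.2 h)
          exact ⟨n, by linarith⟩
        · rintro ⟨n, hn⟩
          have : (0:ℝ) < 1/(n+1) := by positivity
          linarith
      rw [hun]
      rw [Directed.measure_iUnion]
      · refine iSup_le fun n => ?_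
        have : a - 1/(n+1) < a := by
          have : (0:ℝ) < 1/(n+1) := by positivity
          linarith
        obtain ⟨w, hw, hlt⟩ := exists_lt_of_lt_csSup hAne this
        calc ν (Set.Iic (a - 1/(n+1))) ≤ ν (Set.Iic w) := measure_mono (Set.Iic_subset_Iic.2 hlt.le)
          _ = ENNReal.ofReal (F w) := (ofReal_cdfF ν w).symm
          _ ≤ ENNReal.ofReal v := ENNReal.ofReal_le_ofReal hw
      · intro m n
        rcases le_total m n with h | h
        · exact ⟨n, Set.Iic_subset_Iic.2 (by
            have : (1:ℝ)/(n+1) ≤ 1/(m+1) := by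
              apply one_div_le_one_div_of_le (by positivity)
              exact_mod_cast add_le_add_left (Nat.cast_le.2 h : (m:ℝ) ≤ n) 1
            linarith), subset_rfl⟩
        · exact ⟨m, subset_rfl, Set.Iic_subset_Iic.2 (by
            have : (1:ℝ)/(m+1) ≤ 1/(n+1) := by
              apply one_div_le_one_div_of_le (by positivity)
              exact_mod_cast add_le_add_left (Nat.cast_le.2 h : (n:ℝ) ≤ m) 1
            linarith)⟩
    -- ofReal v ≤ ν (Iic a)
    have hIic : ENNReal.ofReal v ≤ ν (Set.Iic a) := by
      have hint : Set.Iic a = ⋂ n : ℕ, Set.Iic (a + 1/(n+1)) := by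
        ext z
        simp only [Set.mem_Iic, Set.mem_iInter]
        constructor
        · intro h n
          have : (0:ℝ) < 1/(n+1) := by positivity
          linarith
        · intro h
          by_contra hza
          obtain ⟨n, hn⟩ := exists_nat_one_div_lt (sub_pos.2 (not_le.1 hza))
          linarith [h n]
      have htend : Filter.Tendsto (fun n : ℕ => ν (Set.Iic (a + 1/(n+1)))) Filter.atTop
          (nhds (ν (⋂ n : ℕ, Set.Iic (a + 1/(n+1))))) := by
        refine tendsto_measure_iInter_atTop (fun n => measurableSet_Iic.nullMeasurableSet)
          (fun m n h => Set.Iic_subset_Iic.2 (by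
            have : (1:ℝ)/(n+1) ≤ 1/(m+1) := by
              apply one_div_le_one_div_of_le (by positivity)
              exact_mod_cast add_le_add_left (Nat.cast_le.2 h : (m:ℝ) ≤ n) 1
            linarith)) ⟨0, measure_ne_top ν _⟩
      rw [hint]
      refine ge_of_tendsto htend (Filter.Eventually.of_forall fun n => ?_)
      have hgt : v < F (a + 1/(n+1)) := by
        have hnotmem : (a + 1/(n+1)) ∉ A := fun hmem => by
          have := le_csSup hbdd hmem
          have hpos : (0:ℝ) < 1/(n+1) := by positivity
          linarith
        exact not_le.1 hnotmem
      calc ENNReal.ofReal v ≤ ENNReal.ofReal (F (a + 1/(n+1))) := ENNReal.ofReal_le_ofReal hgt.le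
        _ = ν (Set.Iic (a + 1/(n+1))) := ofReal_cdfF ν _
    have heq : ν (Set.Iio a) = ν (Set.Iic a) := by
      rw [measure_congr Iio_ae_eq_Iic]
    have : ν A = ENNReal.ofReal v := by
      refine le_antisymm ?_ ?_
      · calc ν A ≤ ν (Set.Iic a) := measure_mono hsub2
          _ = ν (Set.Iio a) := heq.symm
          _ ≤ ENNReal.ofReal v := hIio
      · calc ENNReal.ofReal v ≤ ν (Set.Iic a) := hIic
          _ = ν (Set.Iio a) := heq.symm
          _ ≤ ν A := measure_mono hsub1
    rw [this]
    congr 1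
    simp [hv]

end aux

/-- **Demographic-Parity fairness of the barycentric projection.**
Let `ν 1, …, ν K` be atomless probability measures on `ℝ` (the group-conditional score
distributions) with CDFs `F_s`, and let `G` be a Borel map (e.g. `G = Σ_{s'} p_{s'} Q_{s'}`,
the barycentric combination of group quantile functions).  Then the pushforward of `ν s`
under `G ∘ F_s` is the same for every group `s`; indeed each equals the pushforward under
`G` of the uniform probability measure on `[0,1]`.  Hence the fair predictor
`f_B(x, s) = G(F_s(f*(x, s)))` has the same conditional score distribution in every group,
i.e. `U(f_B) = 0`. -/
theorem barycentric_projection_is_DP_fair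
    (K : ℕ) (hK : 1 ≤ K)
    (ν : Fin K → Measure ℝ) [∀ s, IsProbabilityMeasure (ν s)] [∀ s, NullSingletonClass (ν s)]
    (G : ℝ → ℝ) (hG : Measurable G) :
    (∀ s s' : Fin K,
        Measure.map (fun z => G (cdfF (ν s) z)) (ν s)
          = Measure.map (fun z => G (cdfF (ν s') z)) (ν s')) ∧
    (∀ s : Fin K,
        Measure.map (fun z => G (cdfF (ν s) z)) (ν s)
          = Measure.map G (volume.restrict (Set.Icc (0 : ℝ) 1))) := by
  have h2 : ∀ s : Fin K,
      Measure.map (fun z => G (cdfF (ν s) z)) (ν s)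
        = Measure.map G (volume.restrict (Set.Icc (0 : ℝ) 1)) := by
    intro s
    have : (fun z => G (cdfF (ν s) z)) = G ∘ cdfF (ν s) := rfl
    rw [this, ← Measure.map_map hG (cdfF_meas (ν s)), map_cdfF (ν s)]
  exact ⟨fun s s' => (h2 s).trans (h2 s').symm, h2⟩
end

section
/- Under the hypotheses of the bias detection characterization — ν₁, ν₂ probability measures on ℝ with CDFs F₁, F₂ and quantile functions Q₁, Q₂; p₁, p₂ ∈ [0,1] with p₁ + p₂ = 1; s ∈ {1,2} with s̄ the other index; and z ∈ ℝ with Q_s(F_s(z)) = z — the absolute bias admits the implicit/explicit decomposition: for every w ∈ ℝ, |(p₁Q₁(F_s(z)) + p₂Q₂(F_s(z))) − z| ≤ p_{s̄} · ( |Q_{s̄}(F_s(z)) − w| + |w − z| ). In the paper's notation, with z = f*(x,s), w = f*(x,s̄) and T_{s→s̄} = Q_{s̄} ∘ F_s, this reads |d_B(x,s)| ≤ p_{s̄}·( |T_{s→s̄}(f*(x,s)) − f*(x,s̄)| + |f*(x,s̄) − f*(x,s)| ), decomposing the bias into an implicit part (difference between the transported score and the ceteris-paribus score) and an explicit part (difference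 between the ceteris-paribus score and the original score). -/
open MeasureTheory

/-- The quantile function of a measure `ν` on `ℝ`:
`Q_ν(v) = inf {u ∈ ℝ : F_ν(u) ≥ v}`. -/
noncomputable def quantileQ (ν : Measure ℝ) (v : ℝ) : ℝ :=
  sInf {u : ℝ | v ≤ cdfF ν u}

/-- **Implicit/explicit decomposition of the bias.**
Under the hypotheses of the bias detection characterization (two probability measures on `ℝ`
with CDFs `F` and quantile functions `Q`, weights `p 0, p 1 ∈ [0,1]` summing to `1`, a group
`s` with other index `s̄`, and `z` with `Q_s(F_s(z)) = z`), for every `w ∈ ℝ`,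
`|d_B| = |(p 0 • Q 0 + p 1 • Q 1)(F_s(z)) − z| ≤ p_{s̄} · (|Q_{s̄}(F_s(z)) − w| + |w − z|)`.
With `z = f*(x,s)` and `w = f*(x,s̄)`, the first term is the implicit bias
`|T_{s→s̄}(f*(x,s)) − f*(x,s̄)|` and the second term the explicit bias `|f*(x,s̄) − f*(x,s)|`. -/
theorem bias_implicit_explicit_decomposition
    (ν : Fin 2 → Measure ℝ) [∀ i, IsProbabilityMeasure (ν i)]
    (p : Fin 2 → ℝ) (hp0 : ∀ i, 0 ≤ p i) (hp1 : ∀ i, p i ≤ 1)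
    (hsum : p 0 + p 1 = 1)
    (s sbar : Fin 2) (hss : sbar ≠ s)
    (z : ℝ) (hz : quantileQ (ν s) (cdfF (ν s) z) = z)
    (w : ℝ) :
    |(p 0 * quantileQ (ν 0) (cdfF (ν s) z) + p 1 * quantileQ (ν 1) (cdfF (ν s) z)) - z|
      ≤ p sbar * (|quantileQ (ν sbar) (cdfF (ν s) z) - w| + |w - z|) := by
  have key : ∀ Q : ℝ, |Q - z| ≤ |Q - w| + |w - z| := fun Q => by
    calc |Q - z| = |(Q - w) + (w - z)| := by ring_nf
    _ ≤ |Q - w| + |w - z| := abs_add_le _ _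
  have main : ∀ a b Q : ℝ, 0 ≤ a → a + b = 1 →
      |a * Q + b * z - z| ≤ a * (|Q - w| + |w - z|) := by
    intro a b Q ha hab
    have hb : b = 1 - a := by linarith
    have h1 : a * Q + b * z - z = a * (Q - z) := by rw [hb]; ring
    rw [h1, abs_mul, abs_of_nonneg ha]
    exact mul_le_mul_of_nonneg_left (key Q) ha
  fin_cases s <;> fin_cases sbar <;> simp_all <;>
  first
    | exact main (p 0) (p 1) _ hp0.1 hsum
    | (rw [add_comm (p 0 * z)]; exact main (p 1) (p 0) _ hp0.2 (by linarith))
end
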